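/- Under the assumptions that G(·,x) is μ_G-strongly convex, ∇²₁₁G is L₂-Lipschitz in (z,x), ∇₁F is L₁-Lipschitz in (z,x), ‖∇₁F(z*(x),x)‖ ≤ C_F for all x, and z* is (L_G/μ_G)-Lipschitz, the map v*(x) = -[∇²₁₁G(z*(x),x)]⁻¹ ∇₁F(z*(x),x) is Lipschitz with constant (C_F L₂/μ_G² + L₁/μ_G)(1 + L_G/μ_G). -/

import Mathlib

open Set RealInnerProductSpace

abbrev Vec (n : ℕ) := EuclideanSpace ℝ (Fin n)

/-- Lipschitz continuity of `v*(x) = -[∇²₁₁G(z*(x),x)]⁻¹ ∇₁F(z*(x),x)` with constant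
`(C_F L₂/μ_G² + L₁/μ_G)(1 + L_G/μ_G)`. -/
theorem stmt6 {p d : ℕ} (μG L₁ L₂ LG CF : ℝ)
    (hμG : 0 < μG) (hL₁ : 0 < L₁) (hL₂ : 0 < L₂) (hLG : 0 < LG) (hCF : 0 < CF)
    (G F : Vec p → Vec d → ℝ)
    (G1 : Vec p → Vec d → Vec p)                 -- ∇₁G
    (F1 : Vec p → Vec d → Vec p)                 -- ∇₁F
    (H11 : Vec p → Vec d → (Vec p →L[ℝ] Vec p))  -- ∇²₁₁G
    (zstar vstar : Vec d → Vec p)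
    -- G(·,x) μG-strongly convex, z*(x) its minimizer
    (hsc : ∀ x, StrongConvexOn univ μG (fun z => G z x))
    (hmin : ∀ x, IsMinOn (fun z => G z x) univ (zstar x))
    -- ∇²₁₁G(z*(x),x) ⪰ μ_G I (strong convexity)
    (hpos : ∀ z x (u : Vec p), μG * ‖u‖ ^ 2 ≤ ⟪H11 z x u, u⟫)
    -- ∇²₁₁G is L₂-Lipschitz and ∇₁F is L₁-Lipschitz, jointly in (z, x)
    (hHlip : ∀ z z' x x', ‖H11 z x - H11 z' x'‖ ≤ L₂ * (‖z - z'‖ + ‖x - x'‖))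
    (hFlip : ∀ z z' x x', ‖F1 z x - F1 z' x'‖ ≤ L₁ * (‖z - z'‖ + ‖x - x'‖))
    -- ‖∇₁F(z*(x),x)‖ ≤ C_F
    (hCFbound : ∀ x, ‖F1 (zstar x) x‖ ≤ CF)
    -- z* is (L_G/μ_G)-Lipschitz
    (hzlip : ∀ x x', ‖zstar x - zstar x'‖ ≤ (LG / μG) * ‖x - x'‖)
    -- v*(x) solves ∇²₁₁G(z*(x),x) v*(x) = -∇₁F(z*(x),x)
    (hv : ∀ x, H11 (zstar x) x (vstar x) = - F1 (zstar x) x) :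
    ∀ x x' : Vec d,
      ‖vstar x - vstar x'‖ ≤
        (CF * L₂ / μG ^ 2 + L₁ / μG) * (1 + LG / μG) * ‖x - x'‖ := by
  intro x x'
  have key : ∀ (B : Vec p →L[ℝ] Vec p), (∀ u, μG * ‖u‖ ^ 2 ≤ ⟪B u, u⟫) →
      ∀ u : Vec p, μG * ‖u‖ ≤ ‖B u‖ := by
    intro B hB u
    rcases eq_or_ne u 0 with h | h
    · simp [h]
    · have h1 := hB u
      have h2 : ⟪B u, u⟫ ≤ ‖B u‖ * ‖u‖ := real_inner_le_norm _ _
      have hu : 0 < ‖u‖ := norm_pos_iff.mpr h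
      nlinarith
  set z := zstar x with hz
  set z' := zstar x' with hz'
  set A := H11 z x with hA
  set A' := H11 z' x' with hA'
  set v := vstar x with hvv
  set v' := vstar x' with hvv'
  have hv'bound : ‖v'‖ ≤ CF / μG := by
    have h1 := key A' (fun u => hpos z' x' u) v'
    rw [hv x'] at h1
    rw [norm_neg] at h1
    have h2 := le_trans h1 (hCFbound x')
    rw [le_div_iff₀ hμG]
    nlinarith
  have hvne0 : ‖v'‖ ≥ 0 := norm_nonneg _
  have heq : A (v - v') = -(F1 z x - F1 z' x') - (A - A') v' := by
    have hAv : A v = - F1 z x := hv x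
    have hA'v' : A' v' = - F1 z' x' := hv x'
    simp only [map_sub, ContinuousLinearMap.sub_apply, hAv]
    rw [hA'v']
    abel
  have hnorm : μG * ‖v - v'‖ ≤ ‖F1 z x - F1 z' x'‖ + ‖A - A'‖ * ‖v'‖ := by
    have h1 := key A (fun u => hpos z x u) (v - v')
    rw [heq] at h1
    calc μG * ‖v - v'‖ ≤ ‖-(F1 z x - F1 z' x') - (A - A') v'‖ := h1
      _ ≤ ‖-(F1 z x - F1 z' x')‖ + ‖(A - A') v'‖ := norm_sub_le _ _
      _ ≤ ‖F1 z x - F1 z' x'‖ + ‖A - A'‖ * ‖v'‖ := by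
          rw [norm_neg]
          exact add_le_add_right ((A - A').le_opNorm v') _
  have hF := hFlip z z' x x'
  have hH := hHlip z z' x x'
  have hzz := hzlip x x'
  have hAnn : (0:ℝ) ≤ ‖A - A'‖ := norm_nonneg _
  have hFnn : (0:ℝ) ≤ ‖F1 z x - F1 z' x'‖ := norm_nonneg _
  have hxnn : (0:ℝ) ≤ ‖x - x'‖ := norm_nonneg _
  have hznn : (0:ℝ) ≤ ‖z - z'‖ := norm_nonneg _
  have hS : ‖z - z'‖ + ‖x - x'‖ ≤ (1 + LG / μG) * ‖x - x'‖ := by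
    nlinarith
  have hmul : ‖A - A'‖ * ‖v'‖ ≤ (L₂ * ((1 + LG / μG) * ‖x - x'‖)) * (CF / μG) := by
    apply mul_le_mul _ hv'bound hvne0 (by positivity)
    calc ‖A - A'‖ ≤ L₂ * (‖z - z'‖ + ‖x - x'‖) := hH
      _ ≤ L₂ * ((1 + LG / μG) * ‖x - x'‖) := mul_le_mul_of_nonneg_left hS hL₂.le
  have hFb : ‖F1 z x - F1 z' x'‖ ≤ L₁ * ((1 + LG / μG) * ‖x - x'‖) := by
    calc ‖F1 z x - F1 z' x'‖ ≤ L₁ * (‖z - z'‖ + ‖x - x'‖) := hF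
      _ ≤ L₁ * ((1 + LG / μG) * ‖x - x'‖) := mul_le_mul_of_nonneg_left hS hL₁.le
  have hfinal : μG * ‖v - v'‖ ≤ μG * ((CF * L₂ / μG ^ 2 + L₁ / μG) * (1 + LG / μG) * ‖x - x'‖) := by
    have : μG * ((CF * L₂ / μG ^ 2 + L₁ / μG) * (1 + LG / μG) * ‖x - x'‖)
        = (L₂ * ((1 + LG / μG) * ‖x - x'‖)) * (CF / μG) + L₁ * ((1 + LG / μG) * ‖x - x'‖) := by
      field_simp
    rw [this]
    linarith
  exact le_of_mul_le_mul_left hfinal hμG
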